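/- Let α₁, ..., α_r be algebraic numbers with 0 < |α_i| < 1 for all i. Then there exist multiplicatively independent algebraic numbers β₁, ..., β_t with 0 < |β_j| < 1, roots of unity ζ₁, ..., ζ_r, and nonnegative integers μ_{i,j} such that α_i = ζ_i · ∏_{j=1}^t β_j^{μ_{i,j}} for every i. -/

import Mathlib

open Finset

/-- The complex numbers `β 1, ..., β t` are multiplicatively independent: the only
integer tuple `n` with `∏ j, β j ^ n j = 1` is the zero tuple. -/
def MultIndepFamily {t : ℕ} (β : Fin t → ℂ) : Prop :=
  ∀ n : Fin t → ℤ, (∏ j, β j ^ n j) = 1 → n = 0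



noncomputable section

abbrev Vsp : Type := ℝ × (ℝ ⧸ (Submodule.span ℚ {(2 * Real.pi : ℝ)}))

noncomputable def phi (z : ℂ) : Vsp :=
  (Real.log (‖z‖), Submodule.Quotient.mk (Complex.arg z))

lemma phi_mul {z w : ℂ} (hz : z ≠ 0) (hw : w ≠ 0) : phi (z * w) = phi z + phi w := by
  unfold phi
  refine Prod.ext ?_ ?_
  · have h1 : ‖z‖ ≠ 0 := by simpa using hz
    have h2 : ‖w‖ ≠ 0 := by simpa using hw
    simp [Real.log_mul h1 h2]
  · have h := Complex.arg_mul_coe_angle hz hw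
    rw [← Real.Angle.coe_add, Real.Angle.angle_eq_iff_two_pi_dvd_sub] at h
    obtain ⟨k, hk⟩ := h
    show Submodule.Quotient.mk _ = Submodule.Quotient.mk (_ + _)
    rw [Submodule.Quotient.eq, hk]
    have : (2 * Real.pi * (k:ℝ)) = (k:ℚ) • (2 * Real.pi : ℝ) := by
      push_cast [Rat.smul_def]; ring
    rw [this]
    exact Submodule.smul_mem _ _ (Submodule.mem_span_singleton_self _)

lemma phi_one : phi 1 = 0 := by
  unfold phi; simp [Prod.ext_iff]

lemma phi_inv {z : ℂ} (hz : z ≠ 0) : phi z⁻¹ = - phi z := by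
  have h := phi_mul (inv_ne_zero hz) hz
  rw [inv_mul_cancel₀ hz, phi_one] at h
  exact eq_neg_of_add_eq_zero_left h.symm

lemma phi_pow {z : ℂ} (hz : z ≠ 0) (n : ℕ) : phi (z ^ n) = n • phi z := by
  induction n with
  | zero => simpa using phi_one
  | succ n ih =>
    rw [pow_succ, phi_mul (pow_ne_zero n hz) hz, ih, succ_nsmul]

lemma phi_zpow {z : ℂ} (hz : z ≠ 0) (n : ℤ) : phi (z ^ n) = n • phi z := by
  cases n with
  | ofNat n => simpa using phi_pow hz n
  | negSucc n =>
    rw [zpow_negSucc, phi_inv (pow_ne_zero _ hz), phi_pow hz, negSucc_zsmul]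

lemma phi_prod {ι : Type*} (s : Finset ι) (f : ι → ℂ) (hf : ∀ i ∈ s, f i ≠ 0) :
    phi (∏ i ∈ s, f i) = ∑ i ∈ s, phi (f i) := by
  classical
  induction s using Finset.induction with
  | empty => simpa using phi_one
  | @insert a s' hx ih =>
    rw [Finset.prod_insert hx, Finset.sum_insert hx,
      phi_mul (hf a (Finset.mem_insert_self a s'))
        (Finset.prod_ne_zero_iff.mpr fun i hi => hf i (Finset.mem_insert_of_mem hi)),
      ih (fun i hi => hf i (Finset.mem_insert_of_mem hi))]

/-- Kernel of phi consists of roots of unity. -/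
lemma phi_eq_zero_root_of_unity {z : ℂ} (hz : z ≠ 0) (h : phi z = 0) :
    ∃ n : ℕ, 0 < n ∧ z ^ n = 1 := by
  obtain ⟨h1, h2⟩ := Prod.ext_iff.mp h
  have habs : ‖z‖ = 1 := by
    rcases Real.log_eq_zero.mp h1 with h | h | h
    · exact absurd h (by simpa using hz)
    · exact h
    · nlinarith [norm_nonneg z]
  have harg : ∃ q : ℚ, Complex.arg z = q • (2 * Real.pi : ℝ) := by
    have := (Submodule.Quotient.mk_eq_zero _).mp h2
    obtain ⟨q, hq⟩ := Submodule.mem_span_singleton.mp this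
    exact ⟨q, hq.symm⟩
  obtain ⟨q, hq⟩ := harg
  refine ⟨q.den, q.pos, ?_⟩
  have hz' : z = Complex.exp (Complex.arg z * Complex.I) := by
    conv_lhs => rw [← Complex.norm_mul_exp_arg_mul_I z]
    rw [habs]; simp
  rw [hz', ← Complex.exp_nat_mul, hq]
  have hdq : ((q.den : ℚ)) * q = (q.num : ℚ) := by
    rw [mul_comm]; exact Rat.mul_den_eq_num q
  have : ((q.den : ℂ)) * (((q • (2 * Real.pi : ℝ) : ℝ) : ℂ) * Complex.I)
      = (q.num : ℂ) * (2 * Real.pi * Complex.I) := by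
    rw [Rat.smul_def]
    push_cast
    rw [show ((q.den:ℂ)) * ((q:ℂ) * (2 * (Real.pi:ℂ)) * Complex.I) = ((q.den:ℂ) * (q:ℂ)) * (2 * (Real.pi:ℂ) * Complex.I) by ring]
    norm_cast
    congr 1
    exact_mod_cast hdq
  rw [this, Complex.exp_int_mul_two_pi_mul_I]


open Finset

section Helpers

lemma exists_int_eq_mul {q : ℚ} {n : ℕ} (h : q.den ∣ n) : ∃ z : ℤ, (z:ℚ) = q * n := by
  obtain ⟨k, hk⟩ := h
  refine ⟨q.num * k, ?_⟩
  rw [hk]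
  push_cast
  rw [← mul_assoc, Rat.mul_den_eq_num]

lemma isAlgebraic_zpow {x : ℂ} (hx : IsAlgebraic ℚ x) (z : ℤ) : IsAlgebraic ℚ (x ^ z) := by
  cases z with
  | ofNat n =>
    rw [Int.ofNat_eq_coe, zpow_natCast]
    exact isAlgebraic_iff_isIntegral.mpr ((isAlgebraic_iff_isIntegral.mp hx).pow n)
  | negSucc n =>
    rw [zpow_negSucc]
    exact (isAlgebraic_iff_isIntegral.mpr ((isAlgebraic_iff_isIntegral.mp hx).pow (n+1))).inv

lemma isAlgebraic_of_pow {x : ℂ} {n : ℕ} (hn : 0 < n) (h : IsAlgebraic ℚ (x ^ n)) :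
    IsAlgebraic ℚ x := by
  obtain ⟨p, hp0, hpe⟩ := h
  refine ⟨Polynomial.expand ℚ n p, by rwa [Polynomial.expand_ne_zero hn], ?_⟩
  rw [Polynomial.expand_aeval]
  exact hpe

end Helpers


open Finset

variable {t r : ℕ}

def Aval (a x : Fin t → ℚ) : ℚ := ∑ k, a k * x k

def pve (a : Fin t → ℚ) (v : Fin r → Fin t → ℚ) : Fin r → Fin t → ℚ :=
  fun i k => v i k / (-(Aval a (v i)))

def Mb (a : Fin t → ℚ) (v : Fin r → Fin t → ℚ) : ℚ := ∑ i, ∑ k, |pve a v i k|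

def Sb (a : Fin t → ℚ) (v : Fin r → Fin t → ℚ) : ℚ := t * (2 * Mb a v + 1) + 1

def vert (a : Fin t → ℚ) (v : Fin r → Fin t → ℚ) (k₀ : Fin t) : Fin t → Fin t → ℚ :=
  fun k m => -(Mb a v + 1) + if m = k ∧ k ≠ k₀ then Sb a v else 0

def cfun (a : Fin t → ℚ) (v : Fin r → Fin t → ℚ) (k₀ : Fin t) : Fin t → Fin t → ℚ :=
  fun k m => if m = k₀ then
      (-1 - ∑ m' ∈ Finset.univ.erase k₀, a m' * vert a v k₀ k m') / a k₀
    else vert a v k₀ k m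

lemma Mb_nonneg (a : Fin t → ℚ) (v : Fin r → Fin t → ℚ) : 0 ≤ Mb a v := by
  apply Finset.sum_nonneg; intro i _; apply Finset.sum_nonneg; intro k _; positivity

lemma Sb_pos (a : Fin t → ℚ) (v : Fin r → Fin t → ℚ) : 0 < Sb a v := by
  have := Mb_nonneg a v
  unfold Sb; positivity

lemma abs_pve_le (a : Fin t → ℚ) (v : Fin r → Fin t → ℚ) (i : Fin r) (k : Fin t) :
    |pve a v i k| ≤ Mb a v := by
  calc |pve a v i k| ≤ ∑ k', |pve a v i k'| :=
        Finset.single_le_sum (f := fun k' => |pve a v i k'|) (fun _ _ => abs_nonneg _)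
          (mem_univ k)
    _ ≤ Mb a v :=
        Finset.single_le_sum (f := fun i' => ∑ k', |pve a v i' k'|)
          (fun _ _ => Finset.sum_nonneg fun _ _ => abs_nonneg _) (mem_univ i)

/-- A-value of each cone generator is -1. -/
lemma Aval_cfun (a : Fin t → ℚ) (v : Fin r → Fin t → ℚ) (k₀ : Fin t) (ha : a k₀ ≠ 0)
    (k : Fin t) : Aval a (cfun a v k₀ k) = -1 := by
  unfold Aval
  rw [← Finset.sum_erase_add _ _ (mem_univ k₀)]
  have h1 : ∑ m ∈ univ.erase k₀, a m * cfun a v k₀ k m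
      = ∑ m ∈ univ.erase k₀, a m * vert a v k₀ k m := by
    apply Finset.sum_congr rfl
    intro m hm
    rw [cfun, if_neg (Finset.ne_of_mem_erase hm)]
  rw [h1, cfun, if_pos rfl]
  field_simp
  ring

lemma Aval_sum_smul (a : Fin t → ℚ) (g : Fin t → ℚ) (x : Fin t → Fin t → ℚ) :
    Aval a (∑ k, g k • x k) = ∑ k, g k * Aval a (x k) := by
  unfold Aval
  simp only [Finset.sum_apply, Pi.smul_apply, smul_eq_mul, Finset.mul_sum]
  rw [Finset.sum_comm]
  apply Finset.sum_congr rfl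
  intro k _
  apply Finset.sum_congr rfl
  intro m _
  ring

lemma cfun_linearIndependent (a : Fin t → ℚ) (v : Fin r → Fin t → ℚ) (k₀ : Fin t)
    (ha : a k₀ ≠ 0) : LinearIndependent ℚ (cfun a v k₀) := by
  rw [Fintype.linearIndependent_iff]
  intro g hg
  -- sum of g is zero
  have hsum : ∑ k, g k = 0 := by
    have := congrArg (Aval a) hg
    rw [Aval_sum_smul] at this
    have h2 : Aval a (0 : Fin t → ℚ) = 0 := by unfold Aval; simp
    rw [h2] at this
    have h3 : ∑ k, g k * Aval a (cfun a v k₀ k) = -∑ k, g k := by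
      rw [← Finset.sum_neg_distrib]
      apply Finset.sum_congr rfl
      intro k _
      rw [Aval_cfun a v k₀ ha k]; ring
    rw [h3] at this
    linarith
  -- each coordinate m ≠ k₀ gives g m = 0
  have hne : ∀ m : Fin t, m ≠ k₀ → g m = 0 := by
    intro m hm
    have := congrFun hg m
    rw [Finset.sum_apply] at this
    have hexp : ∀ k, (g k • cfun a v k₀ k) m
        = g k * (-(Mb a v + 1)) + (if k = m then g k * Sb a v else 0) := by
      intro k
      have : cfun a v k₀ k m = vert a v k₀ k m := by rw [cfun, if_neg hm]
      rw [Pi.smul_apply, this, vert]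
      by_cases hkm : k = m
      · subst hkm
        rw [if_pos ⟨rfl, hm⟩, if_pos rfl]
        simp [smul_eq_mul]; ring
      · rw [if_neg (fun hc : m = k ∧ k ≠ k₀ => hkm (hc.1.symm)), if_neg hkm]
        simp [smul_eq_mul]
    rw [Finset.sum_congr rfl (fun k _ => hexp k)] at this
    rw [Finset.sum_add_distrib, Finset.sum_ite_eq' univ m (fun k => g k * Sb a v)] at this
    rw [← Finset.sum_mul, hsum] at this
    simp at this
    rcases this with h | h
    · exact h
    · exact absurd h (ne_of_gt (Sb_pos a v))
  -- finally k₀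
  intro k
  by_cases hk : k = k₀
  · subst hk
    rw [← Finset.sum_erase_add _ _ (mem_univ k)] at hsum
    rw [Finset.sum_eq_zero (fun m hm => hne m (Finset.ne_of_mem_erase hm))] at hsum
    linarith
  · exact hne k hk

def muc (a : Fin t → ℚ) (v : Fin r → Fin t → ℚ) (k₀ : Fin t) (i : Fin r) : Fin t → ℚ :=
  fun k => if k = k₀ then 1 - ∑ m ∈ univ.erase k₀, (pve a v i m + (Mb a v + 1)) / Sb a v
    else (pve a v i k + (Mb a v + 1)) / Sb a v

lemma muc_sum (a : Fin t → ℚ) (v : Fin r → Fin t → ℚ) (k₀ : Fin t) (i : Fin r) :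
    ∑ k, muc a v k₀ i k = 1 := by
  rw [← Finset.sum_erase_add _ _ (mem_univ k₀)]
  rw [Finset.sum_congr rfl (fun m hm => by
    rw [muc, if_neg (Finset.ne_of_mem_erase hm)])]
  rw [muc, if_pos rfl]
  ring

lemma muc_nonneg (a : Fin t → ℚ) (v : Fin r → Fin t → ℚ) (k₀ : Fin t) (i : Fin r)
    (k : Fin t) : 0 ≤ muc a v k₀ i k := by
  have hM := Mb_nonneg a v
  have hS := Sb_pos a v
  have hterm : ∀ m : Fin t, 0 ≤ (pve a v i m + (Mb a v + 1)) / Sb a v := by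
    intro m
    apply div_nonneg _ (le_of_lt hS)
    have h1 := abs_pve_le a v i m
    have h2 := neg_abs_le (pve a v i m)
    linarith
  rw [muc]
  by_cases hk : k = k₀
  · rw [if_pos hk]
    have hbound : ∀ m : Fin t, (pve a v i m + (Mb a v + 1)) / Sb a v
        ≤ (2 * Mb a v + 1) / Sb a v := by
      intro m
      rw [div_le_div_iff₀ hS hS]
      have h1 := abs_pve_le a v i m
      have h2 := le_abs_self (pve a v i m)
      nlinarith
    have hsum : ∑ m ∈ univ.erase k₀, (pve a v i m + (Mb a v + 1)) / Sb a v ≤ 1 - 1/Sb a v := by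
      calc ∑ m ∈ univ.erase k₀, (pve a v i m + (Mb a v + 1)) / Sb a v
          ≤ ∑ _m ∈ univ.erase k₀, (2 * Mb a v + 1) / Sb a v :=
            Finset.sum_le_sum (fun m _ => hbound m)
        _ = (univ.erase k₀).card * ((2 * Mb a v + 1) / Sb a v) := by
            rw [Finset.sum_const, nsmul_eq_mul]
        _ ≤ t * ((2 * Mb a v + 1) / Sb a v) := by
            have hcard : (((univ.erase k₀)).card : ℚ) ≤ t := by
              rw [Finset.card_erase_of_mem (Finset.mem_univ _)]
              simp
            have hpos : 0 ≤ (2 * Mb a v + 1) / Sb a v := by positivity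
            exact mul_le_mul_of_nonneg_right hcard hpos
        _ = (Sb a v - 1) / Sb a v := by rw [Sb]; field_simp; ring
        _ ≤ 1 - 1 / Sb a v := by rw [sub_div, div_self (ne_of_gt hS)]
    have : 0 < 1 / Sb a v := by positivity
    linarith
  · rw [if_neg hk]
    exact hterm k

lemma lam_combination (a : Fin t → ℚ) (v : Fin r → Fin t → ℚ) (k₀ : Fin t)
    (ha : a k₀ ≠ 0) (hva : ∀ i, Aval a (v i) < 0) (i : Fin r) :
    v i = ∑ k, ((-(Aval a (v i))) * muc a v k₀ i k) • cfun a v k₀ k := by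
  have hApos : 0 < -(Aval a (v i)) := by have := hva i; linarith
  have hA : -(Aval a (v i)) ≠ 0 := ne_of_gt hApos
  have hS := Sb_pos a v
  set A := Aval a (v i) with hAdef
  set lam : Fin t → ℚ := fun k => (-A) * muc a v k₀ i k with hlam
  have hlamsum : ∑ k, lam k = -A := by
    rw [hlam]
    rw [← Finset.mul_sum, muc_sum, mul_one]
  have hA0 : A ≠ 0 := fun h => hA (by rw [h]; ring)
  have hpve : ∀ m, (-A) * pve a v i m = v i m := by
    intro m
    rw [pve, ← hAdef]
    field_simp
  -- coordinates away from k₀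
  have hcoord : ∀ m : Fin t, m ≠ k₀ → (∑ k, lam k • cfun a v k₀ k) m = v i m := by
    intro m hm
    rw [Finset.sum_apply]
    have hexp : ∀ k : Fin t, (lam k • cfun a v k₀ k) m
        = lam k * (-(Mb a v + 1)) + (if k = m then lam k * Sb a v else 0) := by
      intro k
      have hc : cfun a v k₀ k m = vert a v k₀ k m := by rw [cfun, if_neg hm]
      rw [Pi.smul_apply, hc, vert]
      by_cases hkm : k = m
      · subst hkm
        rw [if_pos ⟨rfl, hm⟩, if_pos rfl]
        simp [smul_eq_mul]; ring
      · rw [if_neg (fun hc : m = k ∧ k ≠ k₀ => hkm (hc.1.symm)), if_neg hkm]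
        simp [smul_eq_mul]
    rw [Finset.sum_congr rfl (fun k _ => hexp k)]
    rw [Finset.sum_add_distrib, Finset.sum_ite_eq' univ m (fun k => lam k * Sb a v)]
    rw [if_pos (mem_univ m), ← Finset.sum_mul, hlamsum]
    have hlamm : lam m = (-A) * ((pve a v i m + (Mb a v + 1)) / Sb a v) := by
      simp only [hlam, muc, if_neg hm]
    rw [hlamm]
    have : -A * ((pve a v i m + (Mb a v + 1)) / Sb a v) * Sb a v
        = -A * (pve a v i m + (Mb a v + 1)) := by field_simp
    rw [this]
    have := hpve m
    ring_nf
    ring_nf at this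
    linarith
  -- A-values agree
  have hAval : Aval a (∑ k, lam k • cfun a v k₀ k) = Aval a (v i) := by
    rw [Aval_sum_smul]
    rw [Finset.sum_congr rfl (fun k _ => by rw [Aval_cfun a v k₀ ha k])]
    have : ∑ k, lam k * (-1) = -∑ k, lam k := by rw [← Finset.sum_neg_distrib]; apply Finset.sum_congr rfl; intro k _; ring
    rw [this, hlamsum, ← hAdef]; ring
  -- coordinate k₀
  funext m
  by_cases hm : m = k₀
  · subst hm
    have hsplit : ∀ x : Fin t → ℚ, Aval a x = (∑ m' ∈ univ.erase m, a m' * x m') + a m * x m := by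
      intro x
      rw [Aval, ← Finset.sum_erase_add _ _ (mem_univ m)]
    have h1 := hsplit (∑ k, lam k • cfun a v m k)
    have h2 := hsplit (v i)
    rw [hAval] at h1
    rw [h2] at h1
    have herase : ∑ m' ∈ univ.erase m, a m' * (∑ k, lam k • cfun a v m k) m'
        = ∑ m' ∈ univ.erase m, a m' * v i m' := by
      apply Finset.sum_congr rfl
      intro m' hm'
      rw [hcoord m' (Finset.ne_of_mem_erase hm')]
    rw [herase] at h1
    have := mul_left_cancel₀ ha (by linarith : a m * v i m = a m * (∑ k, lam k • cfun a v m k) m)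
    exact this.symm ▸ rfl
  · exact (hcoord m hm).symm

open Filter Topology

/-- Coordinate version of the simplicial cone lemma. -/
lemma cone_coords {t r : ℕ} (ℓ : Fin t → ℝ) (v : Fin r → Fin t → ℚ)
    (hv : ∀ i, (∑ k, (v i k : ℝ) * ℓ k) < 0) :
    ∃ (s : ℕ) (c : Fin s → Fin t → ℚ),
      LinearIndependent ℚ c ∧
      (∀ k, (∑ m, (c k m : ℝ) * ℓ m) < 0) ∧
      (∀ i, ∃ lam : Fin s → ℚ, (∀ k, 0 ≤ lam k) ∧ v i = ∑ k, lam k • c k) := by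
  rcases Nat.eq_zero_or_pos r with hr | hr
  · subst hr
    exact ⟨0, finZeroElim, linearIndependent_empty_type, finZeroElim, finZeroElim⟩
  -- r ≥ 1 : get a coordinate where ℓ is nonzero
  have i₀ : Fin r := ⟨0, hr⟩
  have hk₀ : ∃ k₀ : Fin t, ℓ k₀ ≠ 0 := by
    by_contra h
    push_neg at h
    have := hv i₀
    rw [Finset.sum_congr rfl (fun k _ => by rw [h k, mul_zero])] at this
    simp at this
  obtain ⟨k₀, hk₀⟩ := hk₀
  -- choose a sequence of rational approximations of ℓ
  have haseq : ∀ n : ℕ, ∀ m : Fin t, ∃ q : ℚ, |ℓ m - (q:ℝ)| < 1/(n+1) := by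
    intro n m
    exact exists_rat_near (ℓ m) (by positivity)
  choose a ha using fun n => haseq n
  have hatend : ∀ m : Fin t, Tendsto (fun n => ((a n m : ℚ) : ℝ)) atTop (𝓝 (ℓ m)) := by
    intro m
    have h0 : Tendsto (fun n : ℕ => ((a n m : ℚ):ℝ) - ℓ m) atTop (𝓝 0) := by
      apply squeeze_zero_norm (a := fun n : ℕ => 1/((n:ℝ)+1)) _ tendsto_one_div_add_atTop_nhds_zero_nat
      intro n
      rw [Real.norm_eq_abs, abs_sub_comm]
      exact le_of_lt (ha n m)
    have := h0.add_const (ℓ m)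
    simpa using this
  -- limit of Aval (a n) x for fixed x
  have hAtend : ∀ x : Fin t → ℚ, Tendsto (fun n => ((Aval (a n) x : ℚ) : ℝ)) atTop
      (𝓝 (∑ k, (x k : ℝ) * ℓ k)) := by
    intro x
    have : ∀ n, ((Aval (a n) x : ℚ) : ℝ) = ∑ k, ((a n k : ℚ):ℝ) * ((x k : ℚ):ℝ) := by
      intro n; rw [Aval]; push_cast; ring_nf
    simp_rw [this]
    have hlim : ∀ k : Fin t, Tendsto (fun n => ((a n k : ℚ):ℝ) * ((x k : ℚ):ℝ)) atTop
        (𝓝 ((x k : ℝ) * ℓ k)) := by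
      intro k
      have := (hatend k).mul_const ((x k : ℚ):ℝ)
      simpa [mul_comm] using this
    exact tendsto_finset_sum _ (fun k _ => hlim k)
  -- eventual hypotheses
  have E1 : ∀ᶠ n in atTop, ∀ i, Aval (a n) (v i) < 0 := by
    rw [Filter.eventually_all]
    intro i
    filter_upwards [(hAtend (v i)).eventually_lt_const (hv i)] with n hn
    exact_mod_cast hn
  have E2 : ∀ᶠ n in atTop, a n k₀ ≠ 0 := by
    filter_upwards [(hatend k₀).eventually_ne hk₀] with n hn
    exact_mod_cast hn
  -- limits of the construction components
  set Lv : Fin r → ℝ := fun i => ∑ k, (v i k : ℝ) * ℓ k with hLv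
  have hLvne : ∀ i, -(Lv i) ≠ 0 := fun i => ne_of_gt (by have := hv i; simp only [hLv]; linarith)
  set pinf : Fin r → Fin t → ℝ := fun i k => (v i k : ℝ) / (-(Lv i)) with hpinf
  have hptend : ∀ i k, Tendsto (fun n => ((pve (a n) v i k : ℚ):ℝ)) atTop (𝓝 (pinf i k)) := by
    intro i k
    have hc : ∀ n, ((pve (a n) v i k : ℚ):ℝ) = (v i k : ℝ) / (-((Aval (a n) (v i) : ℚ):ℝ)) := by
      intro n; rw [pve]; push_cast; ring_nf
    simp_rw [hc]
    exact tendsto_const_nhds.div ((hAtend (v i)).neg) (hLvne i)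
  set Minf : ℝ := ∑ i, ∑ k, |pinf i k| with hMinf
  have hMtend : Tendsto (fun n => ((Mb (a n) v : ℚ):ℝ)) atTop (𝓝 Minf) := by
    have hc : ∀ n, ((Mb (a n) v : ℚ):ℝ) = ∑ i, ∑ k, |((pve (a n) v i k : ℚ):ℝ)| := by
      intro n; rw [Mb]; push_cast; ring_nf
    simp_rw [hc]
    exact tendsto_finset_sum _ (fun i _ => tendsto_finset_sum _ (fun k _ => (hptend i k).abs))
  set Sinf : ℝ := t * (2 * Minf + 1) + 1 with hSinf
  have hStend : Tendsto (fun n => ((Sb (a n) v : ℚ):ℝ)) atTop (𝓝 Sinf) := by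
    have hc : ∀ n, ((Sb (a n) v : ℚ):ℝ) = t * (2 * ((Mb (a n) v : ℚ):ℝ) + 1) + 1 := by
      intro n; rw [Sb]; push_cast; ring_nf
    simp_rw [hc]
    exact (((hMtend.const_mul 2).add_const 1).const_mul (t:ℝ)).add_const 1
  set vinf : Fin t → Fin t → ℝ := fun k m => -(Minf + 1) + if m = k ∧ k ≠ k₀ then Sinf else 0
    with hvinf
  have hvtend : ∀ k m, Tendsto (fun n => ((vert (a n) v k₀ k m : ℚ):ℝ)) atTop (𝓝 (vinf k m)) := by
    intro k m
    have hc : ∀ n, ((vert (a n) v k₀ k m : ℚ):ℝ)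
        = -(((Mb (a n) v : ℚ):ℝ) + 1) + if m = k ∧ k ≠ k₀ then ((Sb (a n) v : ℚ):ℝ) else 0 := by
      intro n; rw [vert]
      by_cases h : m = k ∧ k ≠ k₀
      · rw [if_pos h, if_pos h]; push_cast; ring_nf
      · rw [if_neg h, if_neg h]; push_cast; ring_nf
    simp_rw [hc, hvinf]
    by_cases h : m = k ∧ k ≠ k₀
    · simp only [if_pos h]
      exact ((hMtend.add_const 1).neg).add hStend
    · simp only [if_neg h]
      simpa using ((hMtend.add_const 1).neg).add_const 0
  set cinf : Fin t → Fin t → ℝ := fun k m => if m = k₀ then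
      (-1 - ∑ m' ∈ Finset.univ.erase k₀, ℓ m' * vinf k m') / ℓ k₀ else vinf k m with hcinf
  have hctend : ∀ k m, Tendsto (fun n => ((cfun (a n) v k₀ k m : ℚ):ℝ)) atTop (𝓝 (cinf k m)) := by
    intro k m
    by_cases h : m = k₀
    · have hc : ∀ n, ((cfun (a n) v k₀ k m : ℚ):ℝ)
          = (-1 - ∑ m' ∈ Finset.univ.erase k₀, ((a n m' : ℚ):ℝ) * ((vert (a n) v k₀ k m' : ℚ):ℝ))
            / ((a n k₀ : ℚ):ℝ) := by
        intro n; rw [cfun, if_pos h]; push_cast; ring_nf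
      simp_rw [hc, hcinf, if_pos h]
      apply Tendsto.div _ (hatend k₀) hk₀
      apply Tendsto.const_sub
      exact tendsto_finset_sum _ (fun m' _ => (hatend m').mul (hvtend k m'))
    · have hc : ∀ n, ((cfun (a n) v k₀ k m : ℚ):ℝ) = ((vert (a n) v k₀ k m : ℚ):ℝ) := by
        intro n; rw [cfun, if_neg h]
      simp_rw [hc, hcinf, if_neg h]
      exact hvtend k m
  -- the L-value of each generator tends to the L-value of the limit generator, which is -1
  have hLctend : ∀ k, Tendsto (fun n => ∑ m, ((cfun (a n) v k₀ k m : ℚ):ℝ) * ℓ m) atTop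
      (𝓝 (∑ m, cinf k m * ℓ m)) :=
    fun k => tendsto_finset_sum _ (fun m _ => (hctend k m).mul_const (ℓ m))
  have hcinfL : ∀ k, (∑ m, cinf k m * ℓ m) = -1 := by
    intro k
    have h1 : Tendsto (fun n => ∑ m, ((cfun (a n) v k₀ k m : ℚ):ℝ) * ((a n m : ℚ):ℝ)) atTop
        (𝓝 (∑ m, cinf k m * ℓ m)) :=
      tendsto_finset_sum _ (fun m _ => (hctend k m).mul (hatend m))
    have h2 : (fun n => ∑ m, ((cfun (a n) v k₀ k m : ℚ):ℝ) * ((a n m : ℚ):ℝ))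
        =ᶠ[atTop] (fun _ => (-1 : ℝ)) := by
      filter_upwards [E2] with n hn
      have := Aval_cfun (a n) v k₀ hn k
      have hcast := congrArg (fun q : ℚ => (q : ℝ)) this
      rw [Aval] at hcast
      push_cast at hcast
      rw [← hcast]
      apply Finset.sum_congr rfl
      intro m _
      ring
    have h3 := h1.congr' h2
    have h4 : Tendsto (fun _ : ℕ => (-1:ℝ)) atTop (𝓝 (-1)) := tendsto_const_nhds
    exact tendsto_nhds_unique h3 h4
  have E3 : ∀ᶠ n in atTop, ∀ k, (∑ m, ((cfun (a n) v k₀ k m : ℚ):ℝ) * ℓ m) < 0 := by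
    rw [Filter.eventually_all]
    intro k
    apply (hLctend k).eventually_lt_const
    rw [hcinfL k]
    norm_num
  obtain ⟨n, hn1, hn2, hn3⟩ := (E1.and (E2.and E3)).exists
  refine ⟨t, cfun (a n) v k₀, cfun_linearIndependent (a n) v k₀ hn2, hn3, ?_⟩
  intro i
  refine ⟨fun k => (-(Aval (a n) (v i))) * muc (a n) v k₀ i k, ?_, ?_⟩
  · intro k
    have h1 := hn1 i
    exact mul_nonneg (by linarith) (muc_nonneg (a n) v k₀ i k)
  · exact lam_combination (a n) v k₀ hn2 hn1 i

/-- Abstract version: in a `ℚ`-vector space with an `ℝ`-valued linear functional. -/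
lemma cone_abstract {V : Type*} [AddCommGroup V] [Module ℚ V] (L : V →ₗ[ℚ] ℝ)
    {r : ℕ} (w : Fin r → V) (hw : ∀ i, L (w i) < 0) :
    ∃ (s : ℕ) (c : Fin s → V),
      LinearIndependent ℚ c ∧
      (∀ j, L (c j) < 0) ∧
      (∀ j, c j ∈ Submodule.span ℚ (Set.range w)) ∧
      (∀ i, ∃ lam : Fin s → ℚ, (∀ j, 0 ≤ lam j) ∧ w i = ∑ j, lam j • c j) := by
  classical
  set W := Submodule.span ℚ (Set.range w) with hW
  haveI : Module.Finite ℚ W := by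
    apply Module.Finite.span_of_finite
    exact Set.finite_range w
  set t := Module.finrank ℚ W with ht
  set b : Module.Basis (Fin t) ℚ W := Module.finBasis ℚ W with hb
  set wv : Fin r → W := fun i => ⟨w i, Submodule.subset_span (Set.mem_range_self i)⟩ with hwv
  set vcoord : Fin r → Fin t → ℚ := fun i k => b.repr (wv i) k with hvcoord
  set ℓ : Fin t → ℝ := fun k => L ((b k : W) : V) with hℓ
  have hrepr : ∀ x : W, L (x : V) = ∑ k, (b.repr x k : ℝ) * ℓ k := by
    intro x
    conv_lhs => rw [← Module.Basis.sum_repr b x]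
    rw [Submodule.coe_sum]
    rw [map_sum]
    apply Finset.sum_congr rfl
    intro k _
    rw [SetLike.val_smul, map_smul, Rat.smul_def]
  have hv : ∀ i, (∑ k, (vcoord i k : ℝ) * ℓ k) < 0 := by
    intro i
    rw [← hrepr (wv i)]
    exact hw i
  obtain ⟨s, cc, hind, hneg, hcoef⟩ := cone_coords ℓ vcoord hv
  set e := b.equivFun with he
  set cW : Fin s → W := fun j => e.symm (cc j) with hcW
  refine ⟨s, fun j => (cW j : V), ?_, ?_, ?_, ?_⟩
  · have h1 : LinearIndependent ℚ cW := by
      apply hind.map' e.symm.toLinearMap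
      exact LinearMap.ker_eq_bot_of_injective e.symm.injective
    exact h1.map' W.subtype (Submodule.ker_subtype W)
  · intro j
    rw [hrepr (cW j)]
    have : ∀ k, b.repr (cW j) k = cc j k := by
      intro k
      rw [hcW]
      have h2 := congrFun (e.apply_symm_apply (cc j)) k
      rw [← h2, he, Module.Basis.equivFun_apply]
    rw [Finset.sum_congr rfl (fun k _ => by rw [this k])]
    exact hneg j
  · intro j
    exact (cW j).2
  · intro i
    obtain ⟨lam, hlam0, hlameq⟩ := hcoef i
    refine ⟨lam, hlam0, ?_⟩
    have hwe : wv i = e.symm (vcoord i) := by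
      apply e.injective
      rw [LinearEquiv.apply_symm_apply]
      funext k
      simp [he, hvcoord, Module.Basis.equivFun_apply]
    have : wv i = ∑ j, lam j • cW j := by
      rw [hwe, hlameq, map_sum]
      apply Finset.sum_congr rfl
      intro j _
      rw [map_smul, hcW]
    have hfin := congrArg (Subtype.val) this
    rw [Submodule.coe_sum] at hfin
    calc w i = ((wv i : W) : V) := rfl
      _ = ∑ j, ((lam j • cW j : W) : V) := hfin
      _ = ∑ j, lam j • ((cW j : W) : V) := by
          apply Finset.sum_congr rfl
          intro j _
          rw [SetLike.val_smul]



theorem stmt3 {r : ℕ} (α : Fin r → ℂ) (halg : ∀ i, IsAlgebraic ℚ (α i))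
    (habs : ∀ i, 0 < ‖α i‖ ∧ ‖α i‖ < 1) :
    ∃ (t : ℕ) (β : Fin t → ℂ),
      (∀ j, IsAlgebraic ℚ (β j)) ∧
      (∀ j, 0 < ‖β j‖ ∧ ‖β j‖ < 1) ∧
      MultIndepFamily β ∧
      ∃ ζ : Fin r → ℂ, (∀ i, ∃ n : ℕ, 0 < n ∧ ζ i ^ n = 1) ∧
        ∃ μ : Fin r → Fin t → ℕ, ∀ i, α i = ζ i * ∏ j, β j ^ μ i j := by
  classical
  have hα0 : ∀ i, α i ≠ 0 := by
    intro i h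
    have := (habs i).1
    rw [h] at this
    simp at this
  set w : Fin r → Vsp := fun i => phi (α i) with hw
  set L : Vsp →ₗ[ℚ] ℝ := LinearMap.fst ℚ ℝ _ with hL
  have hLw : ∀ i, L (w i) < 0 := by
    intro i
    show Real.log (‖α i‖) < 0
    exact Real.log_neg (habs i).1 (habs i).2
  obtain ⟨s, c, hind, hneg, hspan, hcoef⟩ := cone_abstract L w hLw
  have hsp : ∀ j, ∃ q : Fin r → ℚ, ∑ i, q i • w i = c j := fun j =>
    (Submodule.mem_span_range_iff_exists_fun ℚ).mp (hspan j)
  choose qm hqm using hsp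
  choose lam hlam0 hlameq using hcoef
  set D : ℕ := ∏ j : Fin s, ∏ i : Fin r, (qm j i).den with hD
  set E : ℕ := ∏ i : Fin r, ∏ j : Fin s, (lam i j).den with hE
  have hDpos : 0 < D := Finset.prod_pos fun j _ => Finset.prod_pos fun i _ => (qm j i).pos
  have hEpos : 0 < E := Finset.prod_pos fun i _ => Finset.prod_pos fun j _ => (lam i j).pos
  have hDdvd : ∀ j i, (qm j i).den ∣ D := by
    intro j i
    have h1 : (qm j i).den ∣ ∏ i', (qm j i').den := Finset.dvd_prod_of_mem _ (mem_univ i)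
    have h2 : (∏ i', (qm j i').den) ∣ D :=
      Finset.dvd_prod_of_mem (fun j' => ∏ i', (qm j' i').den) (mem_univ j)
    exact dvd_trans h1 h2
  have hEdvd : ∀ i j, (lam i j).den ∣ E := by
    intro i j
    have h1 : (lam i j).den ∣ ∏ j', (lam i j').den := Finset.dvd_prod_of_mem _ (mem_univ j)
    have h2 : (∏ j', (lam i j').den) ∣ E :=
      Finset.dvd_prod_of_mem (fun i' => ∏ j', (lam i' j').den) (mem_univ i)
    exact dvd_trans h1 h2
  choose mz hmz using fun j i => exists_int_eq_mul (hDdvd j i)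
  have hnat : ∀ i j, ∃ m : ℕ, (m : ℚ) = lam i j * E := by
    intro i j
    obtain ⟨z, hz⟩ := exists_int_eq_mul (hEdvd i j)
    have hz0 : 0 ≤ z := by
      have h1 : (0:ℚ) ≤ (z:ℚ) := by
        rw [hz]
        exact mul_nonneg (hlam0 i j) (by positivity)
      exact_mod_cast h1
    refine ⟨z.toNat, ?_⟩
    rw [← hz]
    norm_cast
    omega
  choose μ hμ using hnat
  set g : Fin s → ℂ := fun j => ∏ i, (α i) ^ (mz j i) with hg
  have hg0 : ∀ j, g j ≠ 0 := fun j =>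
    Finset.prod_ne_zero_iff.mpr fun i _ => zpow_ne_zero _ (hα0 i)
  set N : ℕ := D * E with hN
  have hNpos : 0 < N := Nat.mul_pos hDpos hEpos
  choose β hβ using fun j => IsAlgClosed.exists_pow_nat_eq (g j) hNpos
  have hβ0 : ∀ j, β j ≠ 0 := by
    intro j h
    apply hg0 j
    rw [← hβ j, h, zero_pow (Nat.pos_iff_ne_zero.mp hNpos)]
  have hphig : ∀ j, phi (g j) = (D:ℚ) • c j := by
    intro j
    rw [hg]
    rw [phi_prod _ _ (fun i _ => zpow_ne_zero _ (hα0 i))]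
    rw [Finset.sum_congr rfl (fun i _ => phi_zpow (hα0 i) (mz j i))]
    rw [← hqm j, Finset.smul_sum]
    apply Finset.sum_congr rfl
    intro i _
    rw [← Int.cast_smul_eq_zsmul ℚ, hmz j i, smul_smul]
    congr 1
    ring
  have hNQ : ((N:ℚ)) ≠ 0 := by positivity
  have hEQ : ((E:ℚ)) ≠ 0 := by positivity
  have hphiβ : ∀ j, phi (β j) = ((E:ℚ))⁻¹ • c j := by
    intro j
    have h1 : (N:ℚ) • phi (β j) = (N:ℚ) • (((E:ℚ))⁻¹ • c j) := by
      calc (N:ℚ) • phi (β j) = N • phi (β j) := by rw [Nat.cast_smul_eq_nsmul]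
        _ = phi (β j ^ N) := (phi_pow (hβ0 j) N).symm
        _ = phi (g j) := by rw [hβ j]
        _ = (D:ℚ) • c j := hphig j
        _ = (N:ℚ) • (((E:ℚ))⁻¹ • c j) := by
            rw [smul_smul]
            congr 1
            rw [hN]
            push_cast
            field_simp
    exact smul_right_injective Vsp hNQ h1
  have habsβ : ∀ j, 0 < ‖β j‖ ∧ ‖β j‖ < 1 := by
    intro j
    have hpos : 0 < ‖β j‖ := by
      rw [norm_pos_iff]
      exact hβ0 j
    refine ⟨hpos, ?_⟩
    have hlog : Real.log (‖β j‖) < 0 := by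
      have h1 : Real.log (‖β j‖) = L (phi (β j)) := rfl
      rw [h1, hphiβ j, map_smul, Rat.smul_def]
      have h2 := hneg j
      have h3 : (0:ℝ) < (((E:ℚ)⁻¹ : ℚ) : ℝ) := by
        rw [Rat.cast_inv]
        push_cast
        positivity
      exact mul_neg_of_pos_of_neg h3 h2
    exact (Real.log_neg_iff hpos).mp hlog
  have halgβ : ∀ j, IsAlgebraic ℚ (β j) := by
    intro j
    apply isAlgebraic_of_pow hNpos
    rw [hβ j, hg]
    refine isAlgebraic_iff_isIntegral.mpr ((mem_integralClosure_iff ℚ ℂ).mp ?_)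
    apply Subalgebra.prod_mem
    intro i _
    exact (mem_integralClosure_iff ℚ ℂ).mpr
      (isAlgebraic_iff_isIntegral.mp (isAlgebraic_zpow (halg i) (mz j i)))
  have hmult : MultIndepFamily β := by
    intro n hn
    have h1 : phi (∏ j, β j ^ n j) = 0 := by rw [hn, phi_one]
    rw [phi_prod _ _ (fun j _ => zpow_ne_zero _ (hβ0 j))] at h1
    rw [Finset.sum_congr rfl (fun j _ => phi_zpow (hβ0 j) (n j))] at h1
    have h2 : ∑ j, ((n j : ℚ) * (E:ℚ)⁻¹) • c j = 0 := by
      rw [← h1]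
      apply Finset.sum_congr rfl
      intro j _
      rw [hphiβ j, ← Int.cast_smul_eq_zsmul ℚ (n j), smul_smul]
    have h3 := Fintype.linearIndependent_iff.mp hind _ h2
    funext j
    have h4 := h3 j
    have h5 : ((n j : ℚ)) = 0 := by
      rcases mul_eq_zero.mp h4 with h | h
      · exact h
      · exact absurd h (inv_ne_zero hEQ)
    have : n j = 0 := by exact_mod_cast h5
    simpa using this
  set P : Fin r → ℂ := fun i => ∏ j, β j ^ μ i j with hP
  have hP0 : ∀ i, P i ≠ 0 := fun i =>
    Finset.prod_ne_zero_iff.mpr fun j _ => pow_ne_zero _ (hβ0 j)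
  set ζ : Fin r → ℂ := fun i => α i * (P i)⁻¹ with hζ
  have hphiP : ∀ i, phi (P i) = w i := by
    intro i
    rw [hP]
    rw [phi_prod _ _ (fun j _ => pow_ne_zero _ (hβ0 j))]
    rw [Finset.sum_congr rfl (fun j _ => phi_pow (hβ0 j) (μ i j))]
    rw [hlameq i]
    apply Finset.sum_congr rfl
    intro j _
    rw [hphiβ j, ← Nat.cast_smul_eq_nsmul ℚ (μ i j), smul_smul, hμ i j]
    congr 1
    field_simp
  have hphiζ : ∀ i, phi (ζ i) = 0 := by
    intro i
    rw [hζ]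
    show phi (α i * (P i)⁻¹) = 0
    rw [phi_mul (hα0 i) (inv_ne_zero (hP0 i)), phi_inv (hP0 i), hphiP i]
    show w i + -(w i) = 0
    abel
  refine ⟨s, β, halgβ, habsβ, hmult, ζ, ?_, μ, ?_⟩
  · intro i
    exact phi_eq_zero_root_of_unity
      (mul_ne_zero (hα0 i) (inv_ne_zero (hP0 i))) (hphiζ i)
  · intro i
    rw [hζ]
    show α i = α i * (P i)⁻¹ * P i
    rw [mul_assoc, inv_mul_cancel₀ (hP0 i), mul_one]
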